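/- If (δ, v, 0) is feasible for the penalized formulation (R) (i.e., (δ, v, ϖ) is feasible with objective value ϖ = 0), then δ is an exact Nash equilibrium of the game. -/
import Mathlib


open Finset

variable {N : Type*} [Fintype N] [DecidableEq N] [Nonempty N]
variable {A : N → Type*} [∀ i, Fintype (A i)] [∀ i, DecidableEq (A i)]
variable [∀ i, Nonempty (A i)]

/-- `δ` is a mixed strategy profile: each `δ i` is nonnegative and sums to 1. -/
def IsMixedProfile {N : Type*} {A : N → Type*} [∀ i, Fintype (A i)]
    (δ : ∀ i, A i → ℝ) : Prop :=
  (∀ i a, 0 ≤ δ i a) ∧ ∀ i, ∑ a, δ i a = 1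

/-- Expected utility of player `i` under mixed strategy profile `δ`. -/
def expUtil {N : Type*} [Fintype N] [DecidableEq N] {A : N → Type*}
    [∀ i, Fintype (A i)] (u : N → (∀ j, A j) → ℝ) (δ : ∀ i, A i → ℝ) (i : N) : ℝ :=
  ∑ a : ∀ j, A j, (∏ j, δ j (a j)) * u i a

/-- The point-mass (pure) strategy on action `ai`. -/
def pureStrat {N : Type*} {A : N → Type*} [∀ i, DecidableEq (A i)]
    (i : N) (ai : A i) : A i → ℝ := fun b => if b = ai then 1 else 0

/-- `u_i(a_i, δ_{-i})`: expected utility of player `i` when playing the pure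
action `ai` against the opponents' profile `δ_{-i}`. -/
def devUtil {N : Type*} [Fintype N] [DecidableEq N] {A : N → Type*}
    [∀ i, Fintype (A i)] [∀ i, DecidableEq (A i)]
    (u : N → (∀ j, A j) → ℝ) (δ : ∀ i, A i → ℝ) (i : N) (ai : A i) : ℝ :=
  expUtil u (Function.update δ i (pureStrat i ai)) i

/-- Minimum of `u i` over pure action profiles. -/
noncomputable def minU {N : Type*} [Fintype N] [DecidableEq N] {A : N → Type*}
    [∀ i, Fintype (A i)] [∀ i, Nonempty (A i)]
    (u : N → (∀ j, A j) → ℝ) (i : N) : ℝ :=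
  Finset.univ.inf' Finset.univ_nonempty (u i)

/-- Maximum of `u i` over pure action profiles. -/
noncomputable def maxU {N : Type*} [Fintype N] [DecidableEq N] {A : N → Type*}
    [∀ i, Fintype (A i)] [∀ i, Nonempty (A i)]
    (u : N → (∀ j, A j) → ℝ) (i : N) : ℝ :=
  Finset.univ.sup' Finset.univ_nonempty (u i)

/-- `δ` is a Nash equilibrium. -/
def IsNashEq {N : Type*} [Fintype N] [DecidableEq N] {A : N → Type*}
    [∀ i, Fintype (A i)] (u : N → (∀ j, A j) → ℝ) (δ : ∀ i, A i → ℝ) : Prop :=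
  IsMixedProfile δ ∧ ∀ (i : N) (δ' : A i → ℝ), (∀ a, 0 ≤ δ' a) → (∑ a, δ' a = 1) →
    expUtil u (Function.update δ i δ') i ≤ expUtil u δ i

/-- `δ` is an ε-Nash equilibrium. -/
def IsEpsNashEq {N : Type*} [Fintype N] [DecidableEq N] {A : N → Type*}
    [∀ i, Fintype (A i)] (u : N → (∀ j, A j) → ℝ) (δ : ∀ i, A i → ℝ) (ε : ℝ) : Prop :=
  IsMixedProfile δ ∧ ∀ (i : N) (δ' : A i → ℝ), (∀ a, 0 ≤ δ' a) → (∑ a, δ' a = 1) →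
    expUtil u (Function.update δ i δ') i ≤ expUtil u δ i + ε

/-- Feasibility for the mixed-integer formulation (P). -/
def FeasP {N : Type*} [Fintype N] [DecidableEq N] {A : N → Type*}
    [∀ i, Fintype (A i)] [∀ i, DecidableEq (A i)] [∀ i, Nonempty (A i)]
    (u : N → (∀ j, A j) → ℝ) (δ : ∀ i, A i → ℝ) (v : N → ℝ)
    (z s : ∀ i, A i → ℝ) : Prop :=
  IsMixedProfile δ ∧ ∀ (i : N) (ai : A i),
    v i = s i ai + devUtil u δ i ai ∧
    δ i ai ≤ z i ai ∧
    s i ai ≤ (1 - z i ai) * (maxU u i - minU u i) ∧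
    0 ≤ s i ai ∧ s i ai ≤ maxU u i - minU u i ∧
    minU u i ≤ v i ∧ v i ≤ maxU u i ∧
    (z i ai = 0 ∨ z i ai = 1)

/-- Feasibility for the continuous formulation (Q). -/
def FeasQ {N : Type*} [Fintype N] [DecidableEq N] {A : N → Type*}
    [∀ i, Fintype (A i)] [∀ i, DecidableEq (A i)] [∀ i, Nonempty (A i)]
    (u : N → (∀ j, A j) → ℝ) (δ : ∀ i, A i → ℝ) (v : N → ℝ) : Prop :=
  IsMixedProfile δ ∧ ∀ (i : N) (ai : A i),
    0 ≤ v i - devUtil u δ i ai ∧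
    δ i ai * (v i - devUtil u δ i ai) = 0 ∧
    minU u i ≤ v i ∧ v i ≤ maxU u i

/-- Feasibility for the penalized formulation (R). -/
def FeasR {N : Type*} [Fintype N] [DecidableEq N] {A : N → Type*}
    [∀ i, Fintype (A i)] [∀ i, DecidableEq (A i)] [∀ i, Nonempty (A i)]
    (u : N → (∀ j, A j) → ℝ) (δ : ∀ i, A i → ℝ) (v : N → ℝ) (ϖ : ℝ) : Prop :=
  IsMixedProfile δ ∧ ∀ (i : N) (ai : A i),
    δ i ai * (v i - devUtil u δ i ai) ≤ ϖ ∧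
    -(δ i ai * (v i - devUtil u δ i ai)) ≤ ϖ ∧
    0 ≤ v i - devUtil u δ i ai ∧
    minU u i ≤ v i ∧ v i ≤ maxU u i

lemma expUtil_update_eq (u : N → (∀ j, A j) → ℝ) (δ : ∀ i, A i → ℝ)
    (i : N) (g : A i → ℝ) :
    expUtil u (Function.update δ i g) i =
      ∑ a : ∀ j, A j, g (a i) * ((∏ j ∈ univ.erase i, δ j (a j)) * u i a) := by
  unfold expUtil
  refine Finset.sum_congr rfl fun a _ => ?_
  have hprod : (∏ j ∈ univ.erase i, Function.update δ i g j (a j)) =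
      ∏ j ∈ univ.erase i, δ j (a j) :=
    Finset.prod_congr rfl fun j hj => by
      rw [Function.update_of_ne (Finset.ne_of_mem_erase hj)]
  rw [← (Finset.mul_prod_erase univ (fun j => Function.update δ i g j (a j))
      (mem_univ i)), Function.update_self, mul_assoc, hprod]

lemma expUtil_update_eq_sum_devUtil (u : N → (∀ j, A j) → ℝ) (δ : ∀ i, A i → ℝ)
    (i : N) (g : A i → ℝ) :
    expUtil u (Function.update δ i g) i = ∑ ai, g ai * devUtil u δ i ai := by
  have hdev : ∀ ai, devUtil u δ i ai =
      ∑ a : ∀ j, A j, (if a i = ai then (1:ℝ) else 0) *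
        ((∏ j ∈ univ.erase i, δ j (a j)) * u i a) := by
    intro ai
    rw [devUtil, expUtil_update_eq]
    rfl
  rw [expUtil_update_eq]
  simp only [hdev, Finset.mul_sum]
  rw [Finset.sum_comm]
  refine Finset.sum_congr rfl fun a _ => ?_
  rw [Finset.sum_congr rfl (fun ai _ => by
    rw [show g ai * ((if a i = ai then (1:ℝ) else 0) *
        ((∏ j ∈ univ.erase i, δ j (a j)) * u i a)) =
      (if a i = ai then g ai * ((∏ j ∈ univ.erase i, δ j (a j)) * u i a) else 0) by
        split <;> ring])]
  rw [Finset.sum_ite_eq, if_pos (mem_univ _)]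

lemma expUtil_eq_sum_devUtil (u : N → (∀ j, A j) → ℝ) (δ : ∀ i, A i → ℝ) (i : N) :
    expUtil u δ i = ∑ ai, δ i ai * devUtil u δ i ai := by
  rw [← expUtil_update_eq_sum_devUtil u δ i (δ i), Function.update_eq_self]

/-- Any feasible point of (R) with objective value `0` is an exact Nash
equilibrium. -/
theorem feasR_zero_isNashEq (u : N → (∀ j, A j) → ℝ) (δ : ∀ i, A i → ℝ)
    (v : N → ℝ) (hR : FeasR u δ v 0) : IsNashEq u δ := by
  obtain ⟨hmix, hcons⟩ := hR
  refine ⟨hmix, fun i δ' hpos hsum => ?_⟩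
  have hcomp : ∀ ai, δ i ai * (v i - devUtil u δ i ai) = 0 := fun ai =>
    le_antisymm (hcons i ai).1 (by linarith [(hcons i ai).2.1])
  have hval : expUtil u δ i = v i := by
    rw [expUtil_eq_sum_devUtil]
    have : ∀ ai, δ i ai * devUtil u δ i ai = δ i ai * v i := fun ai => by
      have := hcomp ai; ring_nf; ring_nf at this; linarith
    rw [Finset.sum_congr rfl fun ai _ => this ai, ← Finset.sum_mul, hmix.2 i, one_mul]
  rw [expUtil_update_eq_sum_devUtil, hval]
  calc ∑ ai, δ' ai * devUtil u δ i ai ≤ ∑ ai, δ' ai * v i := by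
        refine Finset.sum_le_sum fun ai _ => ?_
        exact mul_le_mul_of_nonneg_left (by linarith [(hcons i ai).2.2.1]) (hpos ai)
    _ = v i := by rw [← Finset.sum_mul, hsum, one_mul]
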